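/- In the O(log m) tower-building algorithm, if the row price multipliers of consecutive strips differ by a factor of at least 2 (after rounding p_i down to powers of 2), then copying a tower of total cost C upward through all strips above it costs at most C(1/2 + 1/4 + ⋯) = C. Consequently, if the initial towers come from OPT(B/4) (cost ≤ B/4), the propagated solution costs at most B/2 before unrounding, and at most B with the original (unrounded) prices. -/

import Mathlib

/-- Geometric propagation cost: if the copy of a tower of cost C placed i strips
above it costs at most C/2^i (prices of consecutive strips differing by a factor
≥ 2 after rounding down to powers of 2), then all copies together cost at most
C(1/2 + 1/4 + ⋯) ≤ C.  Consequently, if C ≤ B/4 (towers from OPT(B/4)), the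
propagated solution costs at most B/2 in rounded prices, and at most B in the
original (unrounded) prices. -/
theorem stmt_10 (C B : ℝ) (hC : 0 ≤ C) (s : ℕ) (cost : ℕ → ℝ)
    (hcost_nonneg : ∀ i, 0 ≤ cost i)
    (hcost : ∀ i, 1 ≤ i → cost i ≤ C / 2 ^ i)
    (hinit : C ≤ B / 4)
    (rounded unrounded : ℝ)
    (hrounded : rounded ≤ C + ∑ i ∈ Finset.Icc 1 s, cost i)
    (hunrounded : unrounded ≤ 2 * rounded) :
    (∑ i ∈ Finset.Icc 1 s, cost i ≤ C) ∧ rounded ≤ B / 2 ∧ unrounded ≤ B := by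
  have hsum : ∑ i ∈ Finset.Icc 1 s, cost i ≤ C := by
    have h1 : ∑ i ∈ Finset.Icc 1 s, cost i ≤ ∑ i ∈ Finset.Icc 1 s, C / 2 ^ i :=
      Finset.sum_le_sum fun i hi => hcost i (Finset.mem_Icc.mp hi).1
    have h2 : ∑ i ∈ Finset.Icc 1 s, C / 2 ^ i ≤ C := by
      have : ∀ n : ℕ, ∑ i ∈ Finset.Icc 1 n, C / 2 ^ i = C * (1 - 1 / 2 ^ n) := by
        intro n
        induction n with
        | zero => simp
        | succ n ih =>
          rw [Finset.sum_Icc_succ_top (by omega : 1 ≤ n + 1), ih]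
          ring
      rw [this s]
      nlinarith [one_div_pos.mpr (pow_pos (by norm_num : (0:ℝ) < 2) s),
        mul_nonneg hC (le_of_lt (one_div_pos.mpr (pow_pos (by norm_num : (0:ℝ) < 2) s)))]
    linarith
  have hr : rounded ≤ B / 2 := by linarith
  exact ⟨hsum, hr, by linarith⟩
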